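/- Let q ≥ 2 be an integer, let s, t ∈ ℂ with s ≠ 0, and let f = (x² + y³)² + s·x·y^{q+4} + t·x·y^{q+5} ∈ ℂ[x,y]. Then: (i) there exist polynomials α, β, u ∈ ℂ[x,y] with u(0,0) ≠ 0 such that u·x³·y^{q+4} = α·(∂f/∂x) + β·(∂f/∂y); and (ii) there exist polynomials α', β', u' ∈ ℂ[x,y] with u'(0,0) ≠ 0 such that u'·x·y^{q+6} = α'·(∂f/∂x) + β'·(∂f/∂y). In particular, x³y^{q+4} and x·y^{q+6} belong to the Jacobian ideal of f in the local ring ℂ[x,y] localized at the maximal ideal (x,y). -/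
import Mathlib


open MvPolynomial

/-- Generic algebraic identity giving `x·y⁸·b` in the ideal `(Fx, Fy)`. -/
theorem keyII_aux {R : Type*} [CommRing R] (x y b s t a P Q R3 Fx Fy : R)
    (hP : P = s + t*y) (hQ : Q = a*s + (a+1)*t*y) (hR : R3 = 3*P + 2*Q)
    (hFx : Fx = 4*x*(x^2+y^3) + y^6*b*P)
    (hFy : Fy = 6*y^2*(x^2+y^3) + x*y^5*b*Q) :
    (6*R3^2 - P*Q^3*y^3*b^2) * (x*y^8*b)
    = (R3*(18*x*y^2 + 3*y^5*b*Q) - 9*P*Q*y^5*b) * Fx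
      + (12*R3*(y^3 - (x^2+y^3)) + 6*P*Q*x*y^3*b - P*Q^2*y^6*b^2) * Fy := by
  subst hP hQ hR hFx hFy
  ring

/-- Generic algebraic identity giving `x³·y⁶·b` in the ideal `(Fx, Fy)`. -/
theorem keyI_aux {R : Type*} [CommRing R] (x y b s t a P Q R3 U6 Ap6 Bp6 Fx Fy : R)
    (hP : P = s + t*y) (hQ : Q = a*s + (a+1)*t*y) (hR : R3 = 3*P + 2*Q)
    (hU : U6 = 6*R3^2 - P*Q^3*y^3*b^2)
    (hA : Ap6 = R3*(18*x*y^2 + 3*y^5*b*Q) - 9*P*Q*y^5*b)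
    (hB : Bp6 = 12*R3*(y^3 - (x^2+y^3)) + 6*P*Q*x*y^3*b - P*Q^2*y^6*b^2)
    (hFx : Fx = 4*x*(x^2+y^3) + y^6*b*P)
    (hFy : Fy = 6*y^2*(x^2+y^3) + x*y^5*b*Q) :
    (12*R3*U6) * (x^3*y^6*b)
    = (3*R3*U6*y^6*b - P*(9*U6*y^6*b - Q^2*y^4*b^2*Ap6) - 12*R3*y*Ap6) * Fx
      + (-(P*(U6*(-(6*x*y^4*b) + Q*y^7*b^2) - Q^2*y^4*b^2*Bp6)) - 12*R3*y*Bp6) * Fy := by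
  subst hP hQ hR hU hA hB hFx hFy
  ring

/-- The polynomial `f = (x² + y³)² + s x y^{q+4} + t x y^{q+5}` (family `W^#_{1,2q-1}`),
with `x = X 0`, `y = X 1`. -/
noncomputable def fWsharpOdd (q : ℕ) (s t : ℂ) : MvPolynomial (Fin 2) ℂ :=
  (X 0 ^ 2 + X 1 ^ 3) ^ 2 + C s * X 0 * X 1 ^ (q + 4) + C t * X 0 * X 1 ^ (q + 5)

/-- For `f = (x² + y³)² + s x y^{q+4} + t x y^{q+5}` with `q ≥ 2` and `s ≠ 0`, there are
units `u, u'` (polynomials with nonzero constant term) and polynomials `α, β, α', β'`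
with `u·x³y^{q+4} = α·f_x + β·f_y` and `u'·x y^{q+6} = α'·f_x + β'·f_y`; in particular
`x³y^{q+4}` and `x y^{q+6}` lie in the Jacobian ideal of `f` in the local ring at `0`. -/
theorem mixed_powers_in_jacobian_WsharpOdd (q : ℕ) (hq : 2 ≤ q) (s t : ℂ)
    (hs : s ≠ 0) :
    (∃ α β u : MvPolynomial (Fin 2) ℂ, MvPolynomial.coeff 0 u ≠ 0 ∧
      u * (X 0 ^ 3 * X 1 ^ (q + 4)) =
        α * pderiv 0 (fWsharpOdd q s t) + β * pderiv 1 (fWsharpOdd q s t)) ∧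
    (∃ α' β' u' : MvPolynomial (Fin 2) ℂ, MvPolynomial.coeff 0 u' ≠ 0 ∧
      u' * (X 0 * X 1 ^ (q + 6)) =
        α' * pderiv 0 (fWsharpOdd q s t) + β' * pderiv 1 (fWsharpOdd q s t)) := by
  obtain ⟨r, rfl⟩ : ∃ r, q = r + 2 := ⟨q - 2, by omega⟩
  set x : MvPolynomial (Fin 2) ℂ := X 0 with hx
  set y : MvPolynomial (Fin 2) ℂ := X 1 with hy
  set b : MvPolynomial (Fin 2) ℂ := y ^ r with hb
  set a : MvPolynomial (Fin 2) ℂ := (r : MvPolynomial (Fin 2) ℂ) + 6 with ha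
  set P : MvPolynomial (Fin 2) ℂ := C s + C t * y with hP
  set Q : MvPolynomial (Fin 2) ℂ := a * C s + (a+1) * C t * y with hQ
  set R3 : MvPolynomial (Fin 2) ℂ := 3*P + 2*Q with hR
  set U6 : MvPolynomial (Fin 2) ℂ := 6*R3^2 - P*Q^3*y^3*b^2 with hU
  set Ap6 : MvPolynomial (Fin 2) ℂ := R3*(18*x*y^2 + 3*y^5*b*Q) - 9*P*Q*y^5*b with hA
  set Bp6 : MvPolynomial (Fin 2) ℂ :=
    12*R3*(y^3 - (x^2+y^3)) + 6*P*Q*x*y^3*b - P*Q^2*y^6*b^2 with hB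
  have hFx : pderiv 0 (fWsharpOdd (r+2) s t) = 4*x*(x^2+y^3) + y^6*b*P := by
    simp only [fWsharpOdd, map_add, pderiv_mul, pderiv_pow, pderiv_X_self, pderiv_C,
      pderiv_X_of_ne (by decide : (1:Fin 2) ≠ 0), pderiv_X_of_ne (by decide : (0:Fin 2) ≠ 1),
      hx, hy, hb, hP]
    push_cast
    ring
  have hFy : pderiv 1 (fWsharpOdd (r+2) s t) = 6*y^2*(x^2+y^3) + x*y^5*b*Q := by
    simp only [fWsharpOdd, map_add, pderiv_mul, pderiv_pow, pderiv_X_self, pderiv_C,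
      pderiv_X_of_ne (by decide : (1:Fin 2) ≠ 0), pderiv_X_of_ne (by decide : (0:Fin 2) ≠ 1),
      hx, hy, hb, hQ, ha]
    push_cast
    ring
  have hconstR3 : constantCoeff R3 = (2*(r:ℂ)+15) * s := by
    simp only [hR, hP, hQ, ha, hy, map_add, map_mul, map_pow, map_ofNat, map_one,
      map_natCast, constantCoeff_C, constantCoeff_X, mul_zero, zero_mul, add_zero]
    ring
  have hR3ne : ((2*(r:ℂ)+15) * s) ≠ 0 := by
    refine mul_ne_zero ?_ hs
    have h1 : ((2*r+15 : ℕ) : ℂ) ≠ 0 := Nat.cast_ne_zero.mpr (by omega)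
    push_cast at h1
    exact h1
  have hconstU6 : constantCoeff U6 = 6 * ((2*(r:ℂ)+15) * s)^2 := by
    simp only [hU, map_sub, map_mul, map_pow, map_ofNat, hconstR3, hy, constantCoeff_X]
    ring
  constructor
  · -- part (i): x^3 y^(q+4)
    refine ⟨3*R3*U6*y^6*b - P*(9*U6*y^6*b - Q^2*y^4*b^2*Ap6) - 12*R3*y*Ap6,
      -(P*(U6*(-(6*x*y^4*b) + Q*y^7*b^2) - Q^2*y^4*b^2*Bp6)) - 12*R3*y*Bp6,
      12*R3*U6, ?_, ?_⟩
    · rw [← constantCoeff_eq]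
      rw [map_mul, map_mul, hconstR3, hconstU6, map_ofNat]
      exact mul_ne_zero (mul_ne_zero (by norm_num) hR3ne)
        (mul_ne_zero (by norm_num) (pow_ne_zero 2 hR3ne))
    · have key := keyI_aux x y b (C s) (C t) a P Q R3 U6 Ap6 Bp6
        (pderiv 0 (fWsharpOdd (r+2) s t)) (pderiv 1 (fWsharpOdd (r+2) s t))
        hP hQ hR hU hA hB hFx hFy
      rw [show x^3 * y^(r+2+4) = x^3*y^6*b from by rw [hb]; ring]
      exact key
  · -- part (ii): x y^(q+6)
    refine ⟨R3*(18*x*y^2 + 3*y^5*b*Q) - 9*P*Q*y^5*b,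
      12*R3*(y^3 - (x^2+y^3)) + 6*P*Q*x*y^3*b - P*Q^2*y^6*b^2,
      U6, ?_, ?_⟩
    · rw [← constantCoeff_eq, hconstU6]
      exact mul_ne_zero (by norm_num) (pow_ne_zero 2 hR3ne)
    · have key := keyII_aux x y b (C s) (C t) a P Q R3
        (pderiv 0 (fWsharpOdd (r+2) s t)) (pderiv 1 (fWsharpOdd (r+2) s t))
        hP hQ hR hFx hFy
      rw [hU, show x * y^(r+2+6) = x*y^8*b from by rw [hb]; ring]
      exact key
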